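/- Suppose C is a finite set of characters on a finite set X and C' ⊆ C is compatible. Then there is a minimal triangulation of the partition intersection graph pig(C) whose set of displayed characters contains C'. -/

import Mathlib

open scoped NNReal

namespace PMCPP

variable {V : Type} {X : Type}

/-- A graph is chordal if every cycle on four or more vertices has a chord:
for every injective cyclic sequence of `n ≥ 4` vertices with consecutive
vertices adjacent, some pair of non-consecutive vertices of the cycle is adjacent. -/
def IsChordal (G : SimpleGraph V) : Prop :=
  ∀ n : ℕ, 4 ≤ n → ∀ f : ZMod n → V, Function.Injective f →
    (∀ i, G.Adj (f i) (f (i + 1))) →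
    ∃ i j : ZMod n, j ≠ i + 1 ∧ i ≠ j + 1 ∧ G.Adj (f i) (f j)

/-- `H` is a triangulation of `G`: a chordal supergraph on the same vertex set. -/
def IsTriangulation (G H : SimpleGraph V) : Prop := IsChordal H ∧ G ≤ H

/-- The fill edges of a triangulation `H` of `G`. -/
def fillEdges (G H : SimpleGraph V) : Set (Sym2 V) := H.edgeSet \ G.edgeSet

/-- `H` is a minimal triangulation of `G`: no graph obtained from `G` by adding a
proper subset of the fill edges of `H` is a triangulation of `G`. -/
def IsMinimalTriangulation (G H : SimpleGraph V) : Prop :=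
  IsTriangulation G H ∧ ∀ H' : SimpleGraph V, IsTriangulation G H' → H' ≤ H → H' = H

/-- `pf G U`: the potential fill edges of `U`, i.e. pairs of distinct vertices
of `U` that are not edges of `G`. -/
def pf (G : SimpleGraph V) (U : Set V) : Set (Sym2 V) :=
  {e : Sym2 V | ¬e.IsDiag ∧ e ∉ G.edgeSet ∧ ∀ v ∈ e, v ∈ U}

/-- `F(H)`: total weight of the fill edges of the triangulation `H` of `G`
under the fill weight `F`. -/
noncomputable def fillSum (G H : SimpleGraph V) (F : Sym2 V → ℝ≥0) : ℝ≥0 :=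
  ∑ᶠ e ∈ fillEdges G H, F e

/-- `fill_F(U)`: sum of `F` over the potential fill edges of `U`. -/
noncomputable def fillF (G : SimpleGraph V) (F : Sym2 V → ℝ≥0) (U : Set V) : ℝ≥0 :=
  ∑ᶠ e ∈ pf G U, F e

/-- `mfi_F(G)`: the minimum weight of a triangulation of `G`. -/
noncomputable def mfi (G : SimpleGraph V) (F : Sym2 V → ℝ≥0) : ℝ≥0 :=
  sInf {x : ℝ≥0 | ∃ H : SimpleGraph V, IsTriangulation G H ∧ x = fillSum G H F}

/-- `H` is an `F`-minimum triangulation of `G`. -/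
def IsFMinTriangulation (G H : SimpleGraph V) (F : Sym2 V → ℝ≥0) : Prop :=
  IsTriangulation G H ∧ ∀ H' : SimpleGraph V, IsTriangulation G H' →
    fillSum G H F ≤ fillSum G H' F

/-- `H` is an `F`-minimum minimal triangulation of `G`. -/
def IsFMinMinimalTriangulation (G H : SimpleGraph V) (F : Sym2 V → ℝ≥0) : Prop :=
  IsFMinTriangulation G H F ∧ IsMinimalTriangulation G H

/-- There is a walk from `x` to `y` in `G` avoiding `S`. -/
def AvoidReach (G : SimpleGraph V) (S : Set V) (x y : V) : Prop :=
  ∃ p : G.Walk x y, ∀ v ∈ p.support, v ∉ S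

/-- `S` is an `xy`-separator of `G`. -/
def IsSeparator (G : SimpleGraph V) (S : Set V) (x y : V) : Prop :=
  x ∉ S ∧ y ∉ S ∧ G.Reachable x y ∧ ¬AvoidReach G S x y

/-- `S` is a minimal separator of `G`: a minimal `xy`-separator for some `x`, `y`. -/
def IsMinSeparator (G : SimpleGraph V) (S : Set V) : Prop :=
  ∃ x y : V, IsSeparator G S x y ∧ ∀ S' ⊂ S, ¬IsSeparator G S' x y

/-- `Δ(G)`: the set of minimal separators of `G`. -/
def minSeps (G : SimpleGraph V) : Set (Set V) := {S | IsMinSeparator G S}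

/-- `C` is a connected component of `G − S`: a maximal `S`-avoiding-connected
set of vertices disjoint from `S`. -/
def IsCompOf (G : SimpleGraph V) (S C : Set V) : Prop :=
  C.Nonempty ∧ Disjoint C S ∧ (∀ x ∈ C, ∀ y ∈ C, AvoidReach G S x y) ∧
    ∀ C' : Set V, C ⊆ C' → Disjoint C' S →
      (∀ x ∈ C', ∀ y ∈ C', AvoidReach G S x y) → C' = C

/-- `S'` is parallel to `S`: `S'` meets at most one connected component of `G − S`. -/
def Parallel (G : SimpleGraph V) (S S' : Set V) : Prop :=
  {C : Set V | IsCompOf G S C ∧ (C ∩ S').Nonempty}.Subsingleton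

/-- `Φ` is a maximal pairwise-parallel set of minimal separators of `G`. -/
def MaxPairwiseParallel (G : SimpleGraph V) (Φ : Set (Set V)) : Prop :=
  Φ ⊆ minSeps G ∧ Φ.Pairwise (Parallel G) ∧
    ∀ Ψ : Set (Set V), Ψ ⊆ minSeps G → Ψ.Pairwise (Parallel G) → Φ ⊆ Ψ → Ψ = Φ

/-- `G_Φ`: the graph obtained from `G` by saturating every separator in `Φ`. -/
def saturate (G : SimpleGraph V) (Φ : Set (Set V)) : SimpleGraph V where
  Adj u v := u ≠ v ∧ (G.Adj u v ∨ ∃ S ∈ Φ, u ∈ S ∧ v ∈ S)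
  symm := by
    refine ⟨?_⟩; rintro u v ⟨h0, h⟩
    refine ⟨h0.symm, ?_⟩
    rcases h with h | ⟨S, hS, hu, hv⟩
    · exact Or.inl h.symm
    · exact Or.inr ⟨S, hS, hv, hu⟩
  loopless := ⟨fun u h => h.1 rfl⟩

/-- `N(C)`: the vertices outside `C` having a neighbor in `C`. -/
def neighborsOf (G : SimpleGraph V) (C : Set V) : Set V :=
  {v | v ∉ C ∧ ∃ u ∈ C, G.Adj u v}

/-- `(S, C)` is a block of `G`. -/
def IsBlock (G : SimpleGraph V) (S C : Set V) : Prop :=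
  S ∈ minSeps G ∧ IsCompOf G S C

/-- `(S, C)` is a full block of `G`: `N(C) = S`. -/
def IsFullBlock (G : SimpleGraph V) (S C : Set V) : Prop :=
  IsBlock G S C ∧ neighborsOf G C = S

/-- The realization `R(S,C)`: the graph on the vertices `S ∪ C` (realized here as
a graph on `V` all of whose edges lie inside `S ∪ C`) whose edges are the edges of
`G` inside `S ∪ C` together with all pairs of distinct vertices of `S`. -/
def realization (G : SimpleGraph V) (S C : Set V) : SimpleGraph V where
  Adj u v := u ≠ v ∧ u ∈ S ∪ C ∧ v ∈ S ∪ C ∧ (G.Adj u v ∨ (u ∈ S ∧ v ∈ S))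
  symm := by
    refine ⟨?_⟩; rintro u v ⟨h0, h1, h2, h3⟩
    refine ⟨h0.symm, h2, h1, ?_⟩
    rcases h3 with h | ⟨ha, hb⟩
    · exact Or.inl h.symm
    · exact Or.inr ⟨hb, ha⟩
  loopless := ⟨fun u h => h.1 rfl⟩

/-- `K` is a maximal clique of `H`. -/
def IsMaximalClique (H : SimpleGraph V) (K : Set V) : Prop :=
  H.IsClique K ∧ ∀ K' : Set V, H.IsClique K' → K ⊆ K' → K' = K

/-- `K` is a potential maximal clique of `G`: a maximal clique of some
minimal triangulation of `G`. -/
def IsPMC (G : SimpleGraph V) (K : Set V) : Prop :=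
  ∃ H : SimpleGraph V, IsMinimalTriangulation G H ∧ IsMaximalClique H K

/-- The graph obtained from `G` by adding the set of edges `E'`. -/
def addEdges (G : SimpleGraph V) (E' : Set (Sym2 V)) : SimpleGraph V :=
  G ⊔ SimpleGraph.fromEdgeSet E'

/-- A character on `X`: a partition of a subset of `X`, i.e. a collection of
nonempty pairwise disjoint subsets (cells) of `X`. -/
def IsCharacter (χ : Set (Set X)) : Prop :=
  (∀ A ∈ χ, A.Nonempty) ∧ χ.PairwiseDisjoint id

/-- Vertices of the partition intersection graph of `C`:
pairs `(A, χ)` with `χ ∈ C` and `A` a cell of `χ`. -/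
def PigV (C : Set (Set (Set X))) : Type _ :=
  {p : Set X × Set (Set X) // p.2 ∈ C ∧ p.1 ∈ p.2}

/-- The partition intersection graph `pig C`: `(A, χ)` and `(A', χ')` are adjacent
iff they are distinct and `A ∩ A' ≠ ∅`. -/
def pig (C : Set (Set (Set X))) : SimpleGraph (PigV C) where
  Adj p q := p ≠ q ∧ (p.val.1 ∩ q.val.1).Nonempty
  symm := by
    refine ⟨?_⟩; rintro p q ⟨h0, h⟩
    exact ⟨h0.symm, by rwa [Set.inter_comm]⟩
  loopless := ⟨fun p h => h.1 rfl⟩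

/-- A triangulation `H` of `pig C` is proper if no fill edge joins a
monochromatic pair (two vertices with the same character). -/
def IsProper (C : Set (Set (Set X))) (H : SimpleGraph (PigV C)) : Prop :=
  ∀ p q : PigV C, H.Adj p q → ¬(pig C).Adj p q → p.val.2 ≠ q.val.2

/-- The displayed characters of a triangulation `H` of `pig C`: the characters
of `C` broken by no fill edge of `H`. -/
def displayedChars (C : Set (Set (Set X))) (H : SimpleGraph (PigV C)) :
    Set (Set (Set X)) :=
  {χ | χ ∈ C ∧ ∀ p q : PigV C, H.Adj p q → ¬(pig C).Adj p q →
      ¬(p.val.2 = χ ∧ q.val.2 = χ)}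

open Classical in
/-- The fill weight `F_w` on `pig C` induced by a character weight `w`:
`w χ` on monochromatic pairs with shared character `χ`, and `0` otherwise. -/
noncomputable def wWeight (C : Set (Set (Set X))) (w : Set (Set X) → ℝ≥0) :
    Sym2 (PigV C) → ℝ≥0 :=
  Sym2.lift ⟨fun p q => if p.val.2 = q.val.2 then w p.val.2 else 0, by
    intro p q
    dsimp only
    by_cases h : p.val.2 = q.val.2
    · rw [if_pos h, if_pos h.symm, h]
    · rw [if_neg h, if_neg (fun h' => h h'.symm)]⟩

/-- The indicator fill weight `F_C` on `pig C`:
`1` on monochromatic pairs and `0` otherwise. -/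
noncomputable def indWeight (C : Set (Set (Set X))) : Sym2 (PigV C) → ℝ≥0 :=
  wWeight C fun _ => 1

/-- `w(C')`: total weight of a set of characters. -/
noncomputable def wsum (w : Set (Set X) → ℝ≥0) (C' : Set (Set (Set X))) : ℝ≥0 :=
  ∑ᶠ χ ∈ C', w χ

/-- An `X`-tree: a finite tree `T` together with `φ : X → V(T)` such that every
node of degree at most two is in the image of `φ`. -/
structure XTree (X : Type) where
  V : Type
  finV : Finite V
  T : SimpleGraph V
  isTree : T.IsTree
  φ : X → V
  lowDegreeLabeled : ∀ v : V, (T.neighborSet v).ncard ≤ 2 → v ∈ Set.range φ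

/-- The vertex set of the minimal subtree of `T` connecting `φ(A)`:
the union of the (unique) paths between labels of elements of `A`. -/
def subtreeVerts {W : Type} (T : SimpleGraph W) (φ : X → W) (A : Set X) : Set W :=
  {v | ∃ a ∈ A, ∃ b ∈ A, ∃ p : T.Path (φ a) (φ b), v ∈ p.val.support}

/-- `(T, φ)` displays the character `χ`: for distinct cells `A`, `A'` of `χ` the
subtrees `T(A)` and `T(A')` share no node. -/
def DisplaysIn {W : Type} (T : SimpleGraph W) (φ : X → W) (χ : Set (Set X)) : Prop :=
  ∀ A ∈ χ, ∀ A' ∈ χ, A ≠ A' → subtreeVerts T φ A ∩ subtreeVerts T φ A' = ∅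

/-- The `X`-tree `t` displays the character `χ`. -/
def Displays (t : XTree X) (χ : Set (Set X)) : Prop := DisplaysIn t.T t.φ χ

/-- `t` is a perfect phylogeny for `C`: it displays every character of `C`. -/
def IsPerfectPhylogeny (C : Set (Set (Set X))) (t : XTree X) : Prop :=
  ∀ χ ∈ C, Displays t χ

/-- `C` is compatible: some `X`-tree displays every character in `C`. -/
def Compatible (C : Set (Set (Set X))) : Prop := ∃ t : XTree X, IsPerfectPhylogeny C t

/-- Isomorphism of `X`-trees: a graph isomorphism carrying one labeling to the other. -/
def XTreeIso (t t' : XTree X) : Prop :=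
  ∃ ψ : t.T ≃g t'.T, ∀ x : X, ψ (t.φ x) = t'.φ x

/-- `t` is ternary: every internal node (degree at least two) has degree three. -/
def Ternary (t : XTree X) : Prop :=
  ∀ v : t.V, 2 ≤ (t.T.neighborSet v).ncard → (t.T.neighborSet v).ncard = 3

/-- The graph obtained from `T` by contracting the edge `uv` (merging `v` into `u`). -/
def contractGraph {W : Type} (T : SimpleGraph W) (u v : W) :
    SimpleGraph {x : W // x ≠ v} where
  Adj a b := a ≠ b ∧
    (T.Adj a.val b.val ∨ (a.val = u ∧ T.Adj v b.val) ∨ (b.val = u ∧ T.Adj a.val v))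
  symm := by
    refine ⟨?_⟩; rintro a b ⟨h0, h⟩
    refine ⟨h0.symm, ?_⟩
    rcases h with h | ⟨h1, h2⟩ | ⟨h1, h2⟩
    · exact Or.inl h.symm
    · exact Or.inr (Or.inr ⟨h1, h2.symm⟩)
    · exact Or.inr (Or.inl ⟨h1, h2.symm⟩)
  loopless := ⟨fun a h => h.1 rfl⟩

open Classical in
/-- The labeling map after contracting the edge `uv` (merging `v` into `u`). -/
noncomputable def contractMap {W : Type} (φ : X → W) (u v : W) (huv : u ≠ v) :
    X → {x : W // x ≠ v} :=
  fun x => if h : φ x = v then ⟨u, huv⟩ else ⟨φ x, h⟩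

/-- The edge `uv` of the `X`-tree `t` is distinguished by `χ`: contracting `uv`
results in an `X`-tree that does not display `χ`. -/
def EdgeDistinguishedBy (t : XTree X) (u v : t.V) (h : t.T.Adj u v)
    (χ : Set (Set X)) : Prop :=
  ¬DisplaysIn (contractGraph t.T u v) (contractMap t.φ u v h.ne) χ

/-- `t` is distinguished by `C`: each edge of `t` is distinguished by some
character of `C`. -/
def DistinguishedBy (C : Set (Set (Set X))) (t : XTree X) : Prop :=
  ∀ u v : t.V, ∀ h : t.T.Adj u v, ∃ χ ∈ C, EdgeDistinguishedBy t u v h χ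

/-- `Δ_min^F(G)`: the minimal separators of `G` that are minimal separators of
some `F`-minimum minimal triangulation of `G`. -/
def minFillSeps (G : SimpleGraph V) (F : Sym2 V → ℝ≥0) : Set (Set V) :=
  {S | ∃ H : SimpleGraph V, IsFMinMinimalTriangulation G H F ∧ S ∈ minSeps H}

section AuxChordal

private lemma hzero_aux {n : ℕ} [NeZero n] (m : ℕ) (h1 : 0 < m) (h2 : m < n) :
    ((m : ℕ) : ZMod n) ≠ 0 := by
  intro h
  have := Nat.le_of_dvd h1 ((ZMod.natCast_eq_zero_iff m n).1 h)
  omega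

private lemma walk_flip {W : Type} {T : SimpleGraph W} (P : W → Prop) :
    ∀ {a b : W} (p : T.Walk a b), P a → ¬P b →
      ∃ u v, s(u, v) ∈ p.edges ∧ P u ∧ ¬P v := by
  intro a b p
  induction p with
  | nil => intro h h'; exact absurd h h'
  | @cons x y z h q ih =>
    intro ha hb
    by_cases hm : P y
    · obtain ⟨u, v, he, h1, h2⟩ := ih hm hb
      exact ⟨u, v, by rw [SimpleGraph.Walk.edges_cons]; exact List.mem_cons_of_mem _ he, h1, h2⟩
    · exact ⟨x, y, by rw [SimpleGraph.Walk.edges_cons]; exact List.mem_cons_self, ha, hm⟩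

private lemma chordal_of_subtree_rep {V W : Type} (T : SimpleGraph W)
    (hA : T.IsAcyclic) (S : V → Set W)
    (hconn : ∀ v, ∀ x ∈ S v, ∀ y ∈ S v,
      ∃ w : T.Walk x y, ∀ z ∈ w.support, z ∈ S v)
    (H : SimpleGraph V)
    (hH : ∀ p q, H.Adj p q ↔ p ≠ q ∧ (S p ∩ S q).Nonempty) :
    IsChordal H := by
  classical
  intro n hn f hinj hadj
  by_contra hc
  push_neg at hc
  haveI : NeZero n := ⟨by omega⟩
  have hsep : ∀ i j : ZMod n, i ≠ j → j ≠ i + 1 → i ≠ j + 1 →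
      ∀ x, x ∈ S (f i) → x ∈ S (f j) → False := by
    intro i j hij h1 h2 x hx1 hx2
    exact hc i j h1 h2 ((hH (f i) (f j)).2 ⟨hinj.ne hij, x, hx1, hx2⟩)
  have hT : ∀ i : ZMod n, ∃ x, x ∈ S (f i) ∧ x ∈ S (f (i + 1)) := by
    intro i
    obtain ⟨-, x, hx1, hx2⟩ := (hH _ _).1 (hadj i)
    exact ⟨x, hx1, hx2⟩
  choose t ht1 ht2 using hT
  -- numeric facts
  have h13 : (1 : ZMod n) ≠ 2 + 1 := fun h =>
    hzero_aux (n := n) 2 (by omega) (by omega) (by push_cast; linear_combination -h)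
  have h32 : ((2 : ZMod n) + 1) ≠ 1 + 1 := fun h =>
    hzero_aux (n := n) 1 (by omega) (by omega) (by push_cast; linear_combination h)
  have h14 : (1 : ZMod n) ≠ (2 + 1) + 1 := fun h =>
    hzero_aux (n := n) 3 (by omega) (by omega) (by push_cast; linear_combination -h)
  have h20 : (2 : ZMod n) ≠ 0 := fun h =>
    hzero_aux (n := n) 2 (by omega) (by omega) (by push_cast; linear_combination h)
  have h03 : (0 : ZMod n) ≠ 2 + 1 := fun h =>
    hzero_aux (n := n) 3 (by omega) (by omega) (by push_cast; linear_combination -h)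
  have h21 : (2 : ZMod n) ≠ 0 + 1 := fun h =>
    hzero_aux (n := n) 1 (by omega) (by omega) (by push_cast; linear_combination h)
  -- the long way walk from t 0 to t 2
  have key : ∀ k : ℕ, k + 2 ≤ n →
      ∃ w : T.Walk (t 0) (t (-(k : ZMod n))),
        ∀ u v, s(u, v) ∈ w.edges →
          ∃ j : ZMod n, j ≠ 1 ∧ j ≠ 2 ∧ u ∈ S (f j) ∧ v ∈ S (f j) := by
    intro k
    induction k with
    | zero =>
      intro _
      rw [show (-((0 : ℕ) : ZMod n)) = 0 by norm_num]
      exact ⟨SimpleGraph.Walk.nil, by simp⟩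
    | succ k ih =>
      intro hk
      obtain ⟨w, hw⟩ := ih (by omega)
      have hmem1 : t (-(k : ZMod n)) ∈ S (f (-(k : ZMod n))) := ht1 _
      have harith : (-(((k + 1 : ℕ) : ZMod n)) + 1) = -(k : ZMod n) := by push_cast; ring
      have hmem2 : t (-((k + 1 : ℕ) : ZMod n)) ∈ S (f (-(k : ZMod n))) := by
        have h := ht2 (-((k + 1 : ℕ) : ZMod n))
        rwa [harith] at h
      obtain ⟨seg, hseg⟩ := hconn (f (-(k : ZMod n))) _ hmem1 _ hmem2
      have hne1 : (-(k : ZMod n)) ≠ 1 := by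
        intro h
        have h0 : ((k + 1 : ℕ) : ZMod n) = 0 := by push_cast; linear_combination -h
        have := Nat.le_of_dvd (by omega) ((ZMod.natCast_eq_zero_iff _ _).1 h0)
        omega
      have hne2 : (-(k : ZMod n)) ≠ 2 := by
        intro h
        have h0 : ((k + 2 : ℕ) : ZMod n) = 0 := by push_cast; linear_combination -h
        have := Nat.le_of_dvd (by omega) ((ZMod.natCast_eq_zero_iff _ _).1 h0)
        omega
      refine ⟨w.append seg, ?_⟩
      intro u v he
      rw [SimpleGraph.Walk.edges_append, List.mem_append] at he
      rcases he with he | he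
      · exact hw u v he
      · exact ⟨-(k : ZMod n), hne1, hne2,
          hseg u (seg.fst_mem_support_of_mem_edges he),
          hseg v (seg.snd_mem_support_of_mem_edges he)⟩
  have hcast2 : (-(((n - 2 : ℕ)) : ZMod n)) = 2 := by
    have h : (((n - 2 : ℕ)) : ZMod n) + 2 = 0 := by
      have h2 : (((n - 2 : ℕ)) : ZMod n) + (((2 : ℕ)) : ZMod n) = ((n : ℕ) : ZMod n) := by
        rw [← Nat.cast_add]
        congr 1
        omega
      rw [ZMod.natCast_self] at h2
      push_cast at h2
      exact h2
    linear_combination -h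
  have key2 := key (n - 2) (by omega)
  rw [hcast2] at key2
  obtain ⟨W', hW'⟩ := key2
  -- the short way walk from t 0 to t 2 inside S (f 1) ∪ S (f 2)
  have ht01 : t 0 ∈ S (f 1) := by have h := ht2 0; rwa [zero_add] at h
  have ht11 : t 1 ∈ S (f 1) := ht1 1
  have ht12 : t 1 ∈ S (f 2) := by have h := ht2 1; rwa [one_add_one_eq_two] at h
  have ht22 : t 2 ∈ S (f 2) := ht1 2
  obtain ⟨w1, hw1⟩ := hconn (f 1) _ ht01 _ ht11
  obtain ⟨w2, hw2⟩ := hconn (f 2) _ ht12 _ ht22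
  have hP2 : t 2 ∉ S (f 1) := fun h =>
    hsep 1 (2 + 1) h13 h32 h14 (t 2) h (ht2 2)
  obtain ⟨u, v, he, hu, hv⟩ :=
    walk_flip (fun x => x ∈ S (f 1)) (w1.append w2).bypass ht01 hP2
  have hWeq : (w1.append w2).bypass = W'.bypass :=
    congrArg Subtype.val (hA.path_unique
      ⟨(w1.append w2).bypass, (w1.append w2).bypass_isPath⟩
      ⟨W'.bypass, W'.bypass_isPath⟩)
  have hv2 : v ∈ S (f 2) := by
    have hvq : v ∈ (w1.append w2).support :=
      (w1.append w2).support_bypass_subset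
        ((w1.append w2).bypass.snd_mem_support_of_mem_edges he)
    rw [SimpleGraph.Walk.mem_support_append_iff] at hvq
    rcases hvq with h | h
    · exact absurd (hw1 v h) hv
    · exact hw2 v h
  have heW : s(u, v) ∈ W'.edges := by
    rw [hWeq] at he
    exact W'.edges_bypass_subset he
  obtain ⟨j, hj1, hj2, hju, hjv⟩ := hW' u v heW
  by_cases hj0 : j = 0
  · subst hj0
    exact hsep 2 0 h20 h03 h21 v hv2 hjv
  · refine hsep 1 j (fun h => hj1 h.symm)
      (by rw [one_add_one_eq_two]; exact hj2)
      (fun h => hj0 (by linear_combination -h)) u hu hju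

end AuxChordal

private lemma subtreeVerts_conn {W : Type} {T : SimpleGraph W} (hT : T.Connected)
    (φ : X → W) (A : Set X) :
    ∀ x ∈ subtreeVerts T φ A, ∀ y ∈ subtreeVerts T φ A,
      ∃ w : T.Walk x y, ∀ z ∈ w.support, z ∈ subtreeVerts T φ A := by
  classical
  rintro x ⟨a, ha, b, hb, p, hx⟩ y ⟨a', ha', b', hb', p', hy⟩
  obtain ⟨q0⟩ := hT.preconnected (φ a) (φ a')
  refine ⟨((p.val.takeUntil x hx).reverse).append
    ((q0.toPath.val).append (p'.val.takeUntil y hy)), ?_⟩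
  intro z hz
  rw [SimpleGraph.Walk.mem_support_append_iff] at hz
  rcases hz with hz | hz
  · rw [SimpleGraph.Walk.support_reverse, List.mem_reverse] at hz
    exact ⟨a, ha, b, hb, p, SimpleGraph.Walk.support_takeUntil_subset _ hx hz⟩
  · rw [SimpleGraph.Walk.mem_support_append_iff] at hz
    rcases hz with hz | hz
    · exact ⟨a, ha, a', ha', q0.toPath, hz⟩
    · exact ⟨a', ha', b', hb', p', SimpleGraph.Walk.support_takeUntil_subset _ hy hz⟩

/-- If `C' ⊆ C` is compatible, then some minimal triangulation of
`pig C` has a set of displayed characters containing `C'`. -/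
theorem exists_minimal_triangulation_displaying_compatible_subset
    {X : Type} [Fintype X] (C C' : Set (Set (Set X))) (hC : ∀ χ ∈ C, IsCharacter χ)
    (hsub : C' ⊆ C) (hcomp : Compatible C') :
    ∃ H : SimpleGraph (PigV C), IsMinimalTriangulation (pig C) H ∧
      C' ⊆ displayedChars C H := by
  classical
  obtain ⟨tr, htr⟩ := hcomp
  haveI : Finite (PigV C) := Subtype.finite
  set Sv : PigV C → Set tr.V := fun p =>
    if p.val.2 ∈ C' then subtreeVerts tr.T tr.φ p.val.1 else Set.univ with hSv
  let H0 : SimpleGraph (PigV C) :=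
    { Adj := fun p q => p ≠ q ∧ (Sv p ∩ Sv q).Nonempty
      symm := by refine ⟨?_⟩; rintro p q ⟨h1, h2⟩; exact ⟨h1.symm, by rwa [Set.inter_comm]⟩
      loopless := ⟨fun p h => h.1 rfl⟩ }
  have hH0adj : ∀ p q, H0.Adj p q ↔ p ≠ q ∧ (Sv p ∩ Sv q).Nonempty := fun p q => Iff.rfl
  have hconn : ∀ p, ∀ x ∈ Sv p, ∀ y ∈ Sv p,
      ∃ w : tr.T.Walk x y, ∀ z ∈ w.support, z ∈ Sv p := by
    intro p
    by_cases hp : p.val.2 ∈ C'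
    · simp only [hSv, if_pos hp]
      exact subtreeVerts_conn tr.isTree.1 tr.φ _
    · simp only [hSv, if_neg hp]
      intro x _ y _
      obtain ⟨w⟩ := tr.isTree.1.preconnected x y
      exact ⟨w, fun z _ => Set.mem_univ z⟩
  have hchordal : IsChordal H0 :=
    chordal_of_subtree_rep tr.T tr.isTree.2 Sv hconn H0 hH0adj
  have hmemSv : ∀ (p : PigV C), ∀ x, x ∈ p.val.1 → tr.φ x ∈ Sv p := by
    intro p x hx
    by_cases hp : p.val.2 ∈ C'
    · simp only [hSv, if_pos hp]
      exact ⟨x, hx, x, hx, ⟨SimpleGraph.Walk.nil, SimpleGraph.Walk.IsPath.nil⟩, by simp⟩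
    · simp only [hSv, if_neg hp]
      exact Set.mem_univ _
  have hle : pig C ≤ H0 := by
    intro p q hpq
    obtain ⟨hne, x, hx1, hx2⟩ := hpq
    exact ⟨hne, tr.φ x, hmemSv p x hx1, hmemSv q x hx2⟩
  -- pick a triangulation between pig C and H0 with the fewest edges
  let Pr : SimpleGraph (PigV C) → Prop := fun G' => IsChordal G' ∧ pig C ≤ G' ∧ G' ≤ H0
  let Ncard : Set ℕ := {k | ∃ G', Pr G' ∧ G'.edgeSet.ncard = k}
  have hNne : Ncard.Nonempty := ⟨H0.edgeSet.ncard, H0, ⟨hchordal, hle, le_refl _⟩, rfl⟩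
  obtain ⟨Hm, hPrm, hcard⟩ := Nat.sInf_mem hNne
  refine ⟨Hm, ⟨⟨hPrm.1, hPrm.2.1⟩, ?_⟩, ?_⟩
  · intro H'' hH'' hle''
    have hPr'' : Pr H'' := ⟨hH''.1, hH''.2, le_trans hle'' hPrm.2.2⟩
    have h1 : H''.edgeSet ⊆ Hm.edgeSet := SimpleGraph.edgeSet_mono hle''
    have h2 : Hm.edgeSet.ncard ≤ H''.edgeSet.ncard := by
      rw [hcard]
      exact Nat.sInf_le ⟨H'', hPr'', rfl⟩
    exact SimpleGraph.edgeSet_inj.1 (Set.eq_of_subset_of_ncard_le h1 h2 (Set.toFinite _))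
  · intro χ hχ
    refine ⟨hsub hχ, ?_⟩
    rintro p q hadj _ ⟨hp, hq⟩
    obtain ⟨hne, z, hz1, hz2⟩ := hPrm.2.2 hadj
    have hAne : p.val.1 ≠ q.val.1 := fun h =>
      hne (Subtype.ext (Prod.ext_iff.mpr ⟨h, hp.trans hq.symm⟩))
    have hz1' : z ∈ subtreeVerts tr.T tr.φ p.val.1 := by
      have hpc : p.val.2 ∈ C' := hp ▸ hχ
      simpa only [hSv, if_pos hpc] using hz1
    have hz2' : z ∈ subtreeVerts tr.T tr.φ q.val.1 := by
      have hqc : q.val.2 ∈ C' := hq ▸ hχ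
      simpa only [hSv, if_pos hqc] using hz2
    have hdisp := htr χ hχ p.val.1 (hp ▸ p.prop.2) q.val.1 (hq ▸ q.prop.2) hAne
    have : z ∈ (∅ : Set tr.V) := hdisp ▸ Set.mem_inter hz1' hz2'
    exact this

end PMCPP
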